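/- Let X be a type of datasets equipped with a symmetric neighboring relation ~, let R be a countable set, let ε* > 0 and k ≥ 1. Suppose for each i ∈ {1,…,k} we have mechanisms Mᵢ : (list of previous outputs in R) × X → PMF(R) such that for every fixed history s the mechanism D ↦ Mᵢ(s, D) is (ε*/k)-DP. Then the k-step adaptive composition that sequentially samples r₁ ~ M₁(D), r₂ ~ M₂(r₁, D), …, r_k ~ M_k((r₁,…,r_{k−1}), D) and outputs the tuple (r₁,…,r_k) is ε*-DP. -/

import Mathlib

/-- A mechanism `M : X → PMF R` is `ε`-DP with respect to a neighboring relation. -/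
def IsDP {X R : Type*} (Neighbor : X → X → Prop) (ε : ℝ) (M : X → PMF R) : Prop :=
  ∀ D D', Neighbor D D' → ∀ E : Set R,
    (M D).toOuterMeasure E ≤ ENNReal.ofReal (Real.exp ε) * (M D').toOuterMeasure E

/-- The `k`-step adaptive composition: sequentially sample `r₁ ~ M 0 [] D`,
`r₂ ~ M 1 [r₁] D`, …, feeding each mechanism the list of previous outputs,
and return the list of all `k` outputs. -/
noncomputable def adaptiveCompose {X R : Type*}
    (M : ℕ → List R → X → PMF R) : ℕ → X → PMF (List R)
  | 0, _ => PMF.pure []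
  | (k + 1), D =>
      (adaptiveCompose M k D).bind (fun s => (M k s D).map (fun r => s ++ [r]))


lemma isdp_pointwise {X R : Type*} {Neighbor : X → X → Prop} {ε : ℝ} {M : X → PMF R}
    (h : IsDP Neighbor ε M) {D D' : X} (hn : Neighbor D D') (r : R) :
    M D r ≤ ENNReal.ofReal (Real.exp ε) * M D' r := by
  have := h D D' hn {r}
  simpa [PMF.toOuterMeasure_apply_singleton] using this

/-- `k`-fold adaptive composition of `(ε*/k)`-DP mechanisms is `ε*`-DP. -/
theorem adaptive_composition_DP
    {X R : Type*} [Countable R]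
    (Neighbor : X → X → Prop) (hsymm : Symmetric Neighbor)
    (εstar : ℝ) (hε : 0 < εstar)
    (k : ℕ) (hk : 1 ≤ k)
    (M : ℕ → List R → X → PMF R)
    (hM : ∀ i < k, ∀ s : List R, IsDP Neighbor (εstar / k) (fun D => M i s D)) :
    IsDP Neighbor εstar (adaptiveCompose M k) := by

  have hk0 : (k : ℝ) ≠ 0 := Nat.cast_ne_zero.mpr (by omega)
  set ε := εstar / k with hεdef
  have key : ∀ n, n ≤ k → ∀ D D', Neighbor D D' → ∀ l,
      adaptiveCompose M n D l ≤ ENNReal.ofReal (Real.exp (n * ε)) * adaptiveCompose M n D' l := by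
    intro n hn
    induction n with
    | zero => intro D D' _ l; simp [adaptiveCompose]; split_ifs <;> simp
    | succ n ih =>
      intro D D' hDD' l
      have hn' : n ≤ k := Nat.le_of_succ_le hn
      simp only [adaptiveCompose, PMF.bind_apply]
      rw [← ENNReal.tsum_mul_left]
      refine ENNReal.tsum_le_tsum fun s => ?_
      have h1 := ih hn' D D' hDD' s
      have h2 : ∀ r, M n s D r ≤ ENNReal.ofReal (Real.exp ε) * M n s D' r :=
        fun r => isdp_pointwise (hM n (Nat.lt_of_succ_le hn) s) hDD' r
      have h3 : ((M n s D).map (fun r => s ++ [r])) l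
          ≤ ENNReal.ofReal (Real.exp ε) * ((M n s D').map (fun r => s ++ [r])) l := by
        simp only [PMF.map_apply]
        rw [← ENNReal.tsum_mul_left]
        refine ENNReal.tsum_le_tsum fun r => ?_
        split
        · exact h2 r
        · simp
      calc adaptiveCompose M n D s * ((M n s D).map (fun r => s ++ [r])) l
          ≤ (ENNReal.ofReal (Real.exp (n * ε)) * adaptiveCompose M n D' s) *
            (ENNReal.ofReal (Real.exp ε) * ((M n s D').map (fun r => s ++ [r])) l) :=
            mul_le_mul' h1 h3
        _ = ENNReal.ofReal (Real.exp ((n + 1 : ℕ) * ε)) *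
            (adaptiveCompose M n D' s * ((M n s D').map (fun r => s ++ [r])) l) := by
            rw [mul_mul_mul_comm, ← ENNReal.ofReal_mul (Real.exp_nonneg _), ← Real.exp_add]
            push_cast
            ring_nf
  intro D D' hDD' E
  rw [PMF.toOuterMeasure_apply, PMF.toOuterMeasure_apply, ← ENNReal.tsum_mul_left]
  refine ENNReal.tsum_le_tsum fun l => ?_
  have hkey := key k le_rfl D D' hDD' l
  have hkε : (k : ℝ) * ε = εstar := by rw [hεdef]; field_simp
  rw [hkε] at hkey
  by_cases hl : l ∈ E
  · simpa [Set.indicator_of_mem hl] using hkey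
  · simp [Set.indicator_of_notMem hl]
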